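/- Let 𝓛(Y) = Σ_{I⊆{1,…,m}} η_I² F_I Y F_Iᵀ for fixed real n×n matrices F_I. If there exists a positive definite n×n matrix Ȳ with 𝓛(Ȳ) ≺ Ȳ, then there exists r ∈ [0,1) with 𝓛(Ȳ) ⪯ r Ȳ, and for every positive semidefinite n×n matrix W₀ and every real m₀ ≥ 0 with W₀ ⪯ m₀ Ȳ, one has 0 ⪯ 𝓛ᵏ(W₀) ⪯ m₀ rᵏ Ȳ for every k ∈ ℕ, where 𝓛ᵏ denotes the k-fold iterate of 𝓛. -/

import Mathlib

open Matrix

/-- The scalar η_I = √(∏_{i∈I} ν̄ᵢ · ∏_{i∉I}(1−ν̄ᵢ)). -/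
noncomputable def eta {m : ℕ} (ν : Fin m → ℝ) (I : Finset (Fin m)) : ℝ :=
  Real.sqrt ((∏ i ∈ I, ν i) * (∏ i ∈ Iᶜ, (1 - ν i)))

/-- The linear operator 𝓛(Y) = Σ_{I⊆{1,…,m}} η_I² F_I Y F_Iᵀ. -/
noncomputable def Lop {m n : ℕ} (ν : Fin m → ℝ)
    (F : Finset (Fin m) → Matrix (Fin n) (Fin n) ℝ)
    (Y : Matrix (Fin n) (Fin n) ℝ) : Matrix (Fin n) (Fin n) ℝ :=
  ∑ I : Finset (Fin m), (eta ν I) ^ 2 • (F I * Y * (F I)ᵀ)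


lemma quad_smul {n : ℕ} (M : Matrix (Fin n) (Fin n) ℝ) (c : ℝ) (x : Fin n → ℝ) :
    (c • x) ⬝ᵥ (M *ᵥ (c • x)) = c ^ 2 * (x ⬝ᵥ (M *ᵥ x)) := by
  rw [mulVec_smul, smul_dotProduct, dotProduct_smul, smul_eq_mul, smul_eq_mul]; ring

lemma herm_smul {n : ℕ} {c : ℝ} {A : Matrix (Fin n) (Fin n) ℝ} (hA : A.IsHermitian) :
    (c • A).IsHermitian :=
  show (c • A)ᴴ = c • A by rw [conjTranspose_smul, star_trivial, hA.eq]

lemma exists_eps {n : ℕ} (hn : 0 < n) {A B : Matrix (Fin n) (Fin n) ℝ}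
    (hA : A.PosDef) (hB : B.PosDef) :
    ∃ ε : ℝ, 0 < ε ∧ (A - ε • B).PosSemidef := by
  haveI : Nonempty (Fin n) := ⟨⟨0, hn⟩⟩
  have hcA : Continuous fun x : Fin n → ℝ => x ⬝ᵥ (A *ᵥ x) := by
    simp only [dotProduct, mulVec]; fun_prop
  have hcB : Continuous fun x : Fin n → ℝ => x ⬝ᵥ (B *ᵥ x) := by
    simp only [dotProduct, mulVec]; fun_prop
  set S : Set (Fin n → ℝ) := Metric.sphere 0 1 with hS
  have hSne : S.Nonempty := NormedSpace.sphere_nonempty.mpr zero_le_one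
  have hne : ∀ x ∈ S, x ≠ 0 := by
    intro x hx h
    rw [hS, Metric.mem_sphere, h, dist_self] at hx
    exact one_ne_zero hx.symm
  have hBpos : ∀ x ∈ S, 0 < x ⬝ᵥ (B *ᵥ x) := fun x hx => by simpa using hB.dotProduct_mulVec_pos (hne x hx)
  have hApos : ∀ x ∈ S, 0 < x ⬝ᵥ (A *ᵥ x) := fun x hx => by simpa using hA.dotProduct_mulVec_pos (hne x hx)
  have hcont : ContinuousOn (fun x => (x ⬝ᵥ (A *ᵥ x)) / (x ⬝ᵥ (B *ᵥ x))) S :=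
    hcA.continuousOn.div hcB.continuousOn fun x hx => (hBpos x hx).ne'
  obtain ⟨x₀, hx₀S, hmin⟩ := (isCompact_sphere (0 : Fin n → ℝ) 1).exists_isMinOn hSne hcont
  set ε := (x₀ ⬝ᵥ (A *ᵥ x₀)) / (x₀ ⬝ᵥ (B *ᵥ x₀)) with hε
  have hεpos : 0 < ε := div_pos (hApos _ hx₀S) (hBpos _ hx₀S)
  have key : ∀ x : Fin n → ℝ, ε * (x ⬝ᵥ (B *ᵥ x)) ≤ x ⬝ᵥ (A *ᵥ x) := by
    intro x
    rcases eq_or_ne x 0 with rfl | hx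
    · simp
    · set y : Fin n → ℝ := ‖x‖⁻¹ • x with hy
      have hnx : ‖x‖ ≠ 0 := norm_ne_zero_iff.mpr hx
      have hyS : y ∈ S := by
        rw [hS, Metric.mem_sphere, dist_zero_right, hy, norm_smul]
        simp [norm_inv, abs_of_nonneg (norm_nonneg x), hnx]
      have hxy : ‖x‖ • y = x := by
        rw [hy, smul_smul, mul_inv_cancel₀ hnx, one_smul]
      have hqA : x ⬝ᵥ (A *ᵥ x) = ‖x‖ ^ 2 * (y ⬝ᵥ (A *ᵥ y)) := by
        have := quad_smul A ‖x‖ y; rwa [hxy] at this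
      have hqB : x ⬝ᵥ (B *ᵥ x) = ‖x‖ ^ 2 * (y ⬝ᵥ (B *ᵥ y)) := by
        have := quad_smul B ‖x‖ y; rwa [hxy] at this
      have h1 : ε ≤ (y ⬝ᵥ (A *ᵥ y)) / (y ⬝ᵥ (B *ᵥ y)) := hmin hyS
      have h2 : ε * (y ⬝ᵥ (B *ᵥ y)) ≤ y ⬝ᵥ (A *ᵥ y) :=
        (le_div_iff₀ (hBpos y hyS)).mp h1
      rw [hqA, hqB]
      calc ε * (‖x‖ ^ 2 * (y ⬝ᵥ (B *ᵥ y))) = ‖x‖ ^ 2 * (ε * (y ⬝ᵥ (B *ᵥ y))) := by ring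
        _ ≤ ‖x‖ ^ 2 * (y ⬝ᵥ (A *ᵥ y)) := mul_le_mul_of_nonneg_left h2 (by positivity)
  refine ⟨ε, hεpos, .of_dotProduct_mulVec_nonneg (hA.1.sub (herm_smul hB.1)) fun x => ?_⟩
  rw [star_trivial, sub_mulVec, dotProduct_sub, smul_mulVec, dotProduct_smul, smul_eq_mul]
  linarith [key x]

lemma psd_smul {n : ℕ} {c : ℝ} {A : Matrix (Fin n) (Fin n) ℝ} (hA : A.PosSemidef) (hc : 0 ≤ c) :
    (c • A).PosSemidef := by
  refine .of_dotProduct_mulVec_nonneg (show (c • A)ᴴ = c • A by rw [conjTranspose_smul, star_trivial, hA.1.eq]) fun x => ?_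
  rw [smul_mulVec, dotProduct_smul, smul_eq_mul]
  exact mul_nonneg hc (hA.dotProduct_mulVec_nonneg x)

lemma Lop_psd {m n : ℕ} (ν : Fin m → ℝ) (F : Finset (Fin m) → Matrix (Fin n) (Fin n) ℝ)
    {Y : Matrix (Fin n) (Fin n) ℝ} (hY : Y.PosSemidef) : (Lop ν F Y).PosSemidef := by
  classical
  unfold Lop
  induction (Finset.univ : Finset (Finset (Fin m))) using Finset.induction_on with
  | empty => simpa using Matrix.PosSemidef.zero
  | @insert J s hi ih =>
    rw [Finset.sum_insert hi]
    refine (psd_smul ?_ (sq_nonneg _)).add ih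
    have := hY.mul_mul_conjTranspose_same (F J)
    rwa [conjTranspose_eq_transpose_of_trivial] at this

lemma Lop_sub {m n : ℕ} (ν : Fin m → ℝ) (F : Finset (Fin m) → Matrix (Fin n) (Fin n) ℝ)
    (A B : Matrix (Fin n) (Fin n) ℝ) : Lop ν F (A - B) = Lop ν F A - Lop ν F B := by
  unfold Lop
  rw [← Finset.sum_sub_distrib]
  congr 1; ext I
  rw [Matrix.mul_sub, Matrix.sub_mul, smul_sub]

lemma Lop_smul {m n : ℕ} (ν : Fin m → ℝ) (F : Finset (Fin m) → Matrix (Fin n) (Fin n) ℝ)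
    (c : ℝ) (A : Matrix (Fin n) (Fin n) ℝ) : Lop ν F (c • A) = c • Lop ν F A := by
  unfold Lop
  rw [Finset.smul_sum]
  congr 1; ext I
  rw [Matrix.mul_smul, Matrix.smul_mul, smul_comm]

/-- if Ȳ ≻ 0 and 𝓛(Ȳ) ≺ Ȳ, then there is r ∈ [0,1) with 𝓛(Ȳ) ⪯ r Ȳ,
and for every W₀ ⪰ 0 and m₀ ≥ 0 with W₀ ⪯ m₀ Ȳ one has
0 ⪯ 𝓛ᵏ(W₀) ⪯ m₀ rᵏ Ȳ for all k. -/
theorem Lop_iterate_decay (m n : ℕ) (hm : 0 < m) (hn : 0 < n) (ν : Fin m → ℝ)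
    (hν : ∀ i, ν i ∈ Set.Icc (0 : ℝ) 1)
    (F : Finset (Fin m) → Matrix (Fin n) (Fin n) ℝ)
    (Ybar : Matrix (Fin n) (Fin n) ℝ) (hYbar : Ybar.PosDef)
    (hL : (Ybar - Lop ν F Ybar).PosDef) :
    ∃ r : ℝ, 0 ≤ r ∧ r < 1 ∧ (r • Ybar - Lop ν F Ybar).PosSemidef ∧
      ∀ (W₀ : Matrix (Fin n) (Fin n) ℝ) (m₀ : ℝ), W₀.PosSemidef → 0 ≤ m₀ →
        (m₀ • Ybar - W₀).PosSemidef →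
        ∀ k : ℕ, ((Lop ν F)^[k] W₀).PosSemidef ∧
          ((m₀ * r ^ k) • Ybar - (Lop ν F)^[k] W₀).PosSemidef := by
  obtain ⟨ε, hεpos, hεpsd⟩ := exists_eps hn hL hYbar
  set ε' : ℝ := min ε 1 with hε'
  have hε'pos : 0 < ε' := lt_min hεpos one_pos
  have hε'le1 : ε' ≤ 1 := min_le_right _ _
  have hε'leε : ε' ≤ ε := min_le_left _ _
  refine ⟨1 - ε', by linarith, by linarith, ?_, ?_⟩
  case _ =>
    have hsum : (1 - ε') • Ybar - Lop ν F Ybar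
        = ((Ybar - Lop ν F Ybar) - ε • Ybar) + (ε - ε') • Ybar := by
      ext i j
      simp only [Matrix.sub_apply, Matrix.add_apply, Matrix.smul_apply, smul_eq_mul]
      ring
    rw [hsum]
    exact hεpsd.add (psd_smul hYbar.posSemidef (by linarith))
  case _ =>
    have hrpsd : ((1 - ε') • Ybar - Lop ν F Ybar).PosSemidef := by
      have hsum : (1 - ε') • Ybar - Lop ν F Ybar
          = ((Ybar - Lop ν F Ybar) - ε • Ybar) + (ε - ε') • Ybar := by
        ext i j
        simp only [Matrix.sub_apply, Matrix.add_apply, Matrix.smul_apply, smul_eq_mul]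
        ring
      rw [hsum]
      exact hεpsd.add (psd_smul hYbar.posSemidef (by linarith))
    intro W₀ m₀ hW₀ hm₀ hWle k
    induction k with
    | zero =>
      refine ⟨by simpa using hW₀, ?_⟩
      simpa using hWle
    | succ k ih =>
      have hr0 : (0:ℝ) ≤ 1 - ε' := by linarith
      have hc : (0:ℝ) ≤ m₀ * (1 - ε') ^ k := mul_nonneg hm₀ (pow_nonneg hr0 k)
      rw [Function.iterate_succ_apply']
      refine ⟨Lop_psd ν F ih.1, ?_⟩
      have hkey : (m₀ * (1 - ε') ^ (k + 1)) • Ybar - Lop ν F ((Lop ν F)^[k] W₀)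
          = (m₀ * (1 - ε') ^ k) • ((1 - ε') • Ybar - Lop ν F Ybar)
            + Lop ν F ((m₀ * (1 - ε') ^ k) • Ybar - (Lop ν F)^[k] W₀) := by
        rw [Lop_sub, Lop_smul]
        ext i j
        simp only [Matrix.sub_apply, Matrix.add_apply, Matrix.smul_apply, smul_eq_mul]
        ring
      rw [hkey]
      exact (psd_smul hrpsd hc).add (Lop_psd ν F ih.2)
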